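/- Given three points (x₁,y₁), (x₂,y₂), (x₃,y₃) with pairwise distinct abscissas on the quartic curve y² = f(x), f(x) = a₄x⁴ + a₃x³ + a₂x² + a₁x + a₀ (characteristic ≠ 2), let P(x) = b₂x² + b₁x + b₀ be the Lagrange interpolating quadratic through the three points. If a₄ − b₂² ≠ 0, then f(x) − P(x)² = (a₄ − b₂²)(x − x₁)(x − x₂)(x − x₃)(x − x₄) with x₄ = −x₁ − x₂ − x₃ − (a₃ − 2b₁b₂)/(a₄ − b₂²), and the point (x₄, −P(x₄)) lies on the curve y² = f(x). -/

import Mathlib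

set_option maxHeartbeats 1000000


/-- Genus-one addition of three points by a swinging parabola: with `P` the
Lagrange interpolating quadratic through three points with pairwise distinct
abscissas on the quartic curve `y² = f(x)`, and `a₄ - b₂² ≠ 0`, the Abel
polynomial `f - P²` factors through the four abscissas, the fourth one given
by Vieta, and `(x₄, -P(x₄))` lies on the curve. -/
theorem abel_three_point_addition {K : Type*} [Field K] (h2 : (2 : K) ≠ 0)
    (a4 a3 a2 a1 a0 : K) (x1 y1 x2 y2 x3 y3 b2 b1 b0 : K)
    (h12 : x1 ≠ x2) (h13 : x1 ≠ x3) (h23 : x2 ≠ x3)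
    (hy1 : y1 ^ 2 = a4 * x1 ^ 4 + a3 * x1 ^ 3 + a2 * x1 ^ 2 + a1 * x1 + a0)
    (hy2 : y2 ^ 2 = a4 * x2 ^ 4 + a3 * x2 ^ 3 + a2 * x2 ^ 2 + a1 * x2 + a0)
    (hy3 : y3 ^ 2 = a4 * x3 ^ 4 + a3 * x3 ^ 3 + a2 * x3 ^ 2 + a1 * x3 + a0)
    (hP1 : b2 * x1 ^ 2 + b1 * x1 + b0 = y1)
    (hP2 : b2 * x2 ^ 2 + b1 * x2 + b0 = y2)
    (hP3 : b2 * x3 ^ 2 + b1 * x3 + b0 = y3)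
    (hlead : a4 - b2 ^ 2 ≠ 0)
    (x4 : K) (hx4 : x4 = -x1 - x2 - x3 - (a3 - 2 * b1 * b2) / (a4 - b2 ^ 2)) :
    (∀ x : K,
      (a4 * x ^ 4 + a3 * x ^ 3 + a2 * x ^ 2 + a1 * x + a0)
          - (b2 * x ^ 2 + b1 * x + b0) ^ 2
        = (a4 - b2 ^ 2) * (x - x1) * (x - x2) * (x - x3) * (x - x4)) ∧
    (-(b2 * x4 ^ 2 + b1 * x4 + b0)) ^ 2
        = a4 * x4 ^ 4 + a3 * x4 ^ 3 + a2 * x4 ^ 2 + a1 * x4 + a0 := by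
  have hd : (a4 - b2 ^ 2) * x4 = (a4 - b2 ^ 2) * (-x1 - x2 - x3) - (a3 - 2 * b1 * b2) := by
    rw [hx4]; field_simp
  have e1 : (b2 * x1 ^ 2 + b1 * x1 + b0) ^ 2
      = a4 * x1 ^ 4 + a3 * x1 ^ 3 + a2 * x1 ^ 2 + a1 * x1 + a0 := by rw [hP1, hy1]
  have e2 : (b2 * x2 ^ 2 + b1 * x2 + b0) ^ 2
      = a4 * x2 ^ 4 + a3 * x2 ^ 3 + a2 * x2 ^ 2 + a1 * x2 + a0 := by rw [hP2, hy2]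
  have e3 : (b2 * x3 ^ 2 + b1 * x3 + b0) ^ 2
      = a4 * x3 ^ 4 + a3 * x3 ^ 3 + a2 * x3 ^ 2 + a1 * x3 + a0 := by rw [hP3, hy3]
  have d12 : x1 - x2 ≠ 0 := sub_ne_zero.mpr h12
  have d13 : x1 - x3 ≠ 0 := sub_ne_zero.mpr h13
  have d23 : x2 - x3 ≠ 0 := sub_ne_zero.mpr h23
  have key : ∀ x : K,
      (a4 * x ^ 4 + a3 * x ^ 3 + a2 * x ^ 2 + a1 * x + a0)
          - (b2 * x ^ 2 + b1 * x + b0) ^ 2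
        = (a4 - b2 ^ 2) * (x - x1) * (x - x2) * (x - x3) * (x - x4) := by
    intro x
    apply mul_left_cancel₀ (mul_ne_zero d12 (mul_ne_zero d13 d23))
    linear_combination
      - ((x - x2) * (x - x3) * (x2 - x3)) * e1
      + ((x - x1) * (x - x3) * (x1 - x3)) * e2
      - ((x - x1) * (x - x2) * (x1 - x2)) * e3
      + ((x1 - x2) * ((x1 - x3) * (x2 - x3)) * (x - x1) * (x - x2) * (x - x3)) * hd
  refine ⟨key, ?_⟩
  linear_combination - key x4
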